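/- Let X be a real Banach space and consider the punctured space Ω = X ∖ {0}, for which d(x) = ‖x‖. The quasihyperbolic metric k on Ω is conformal in the following sense: for every C > 1 there exists r > 0 such that for all x, y ∈ X ∖ {0} with k(x,y) < r, one has C⁻¹·k(x,y) ≤ ‖x − y‖/‖x‖ ≤ C·k(x,y). -/

import Mathlib

/-- The quasihyperbolic length of a path `γ` on `[a,b]` in a domain `Ω`:
`ℓ_k(γ) = ∫ₐᵇ ‖γ′(t)‖ / d(γ(t)) dt`, where `d(x) = dist(x, X ∖ Ω)`.
For `Ω = X ∖ {0}` one has `d(x) = ‖x‖`. -/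
noncomputable def qhLength {X : Type*} [NormedAddCommGroup X] [NormedSpace ℝ X]
    (Ω : Set X) (γ : ℝ → X) (a b : ℝ) : ℝ :=
  ∫ t in a..b, ‖deriv γ t‖ / Metric.infDist (γ t) Ωᶜ

/-- The quasihyperbolic distance on a domain `Ω`: the infimum of quasihyperbolic lengths
over continuously differentiable paths in `Ω` joining the two points. -/
noncomputable def qhDist {X : Type*} [NormedAddCommGroup X] [NormedSpace ℝ X]
    (Ω : Set X) (x y : X) : ℝ :=
  sInf ((fun γ : ℝ → X => qhLength Ω γ 0 1) ''
    {γ | ContDiff ℝ 1 γ ∧ Set.MapsTo γ (Set.Icc 0 1) Ω ∧ γ 0 = x ∧ γ 1 = y})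

section Aux

open Set MeasureTheory intervalIntegral Metric

set_option linter.unusedSectionVars false
set_option linter.unusedVariables false

variable {X : Type*} [NormedAddCommGroup X] [NormedSpace ℝ X] [CompleteSpace X]

lemma infDist_compl_compl (z : X) : Metric.infDist z (({0}ᶜ : Set X)ᶜ) = ‖z‖ := by
  rw [compl_compl, Metric.infDist_singleton, dist_zero_right]

lemma qhLength_nonneg (Ω : Set X) (γ : ℝ → X) :
    0 ≤ qhLength Ω γ 0 1 := by
  apply intervalIntegral.integral_nonneg zero_le_one
  intro t _
  exact div_nonneg (norm_nonneg _) Metric.infDist_nonneg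

lemma qhLength_ge {γ : ℝ → X} (hγ : ContDiff ℝ 1 γ)
    (hmaps : MapsTo γ (Icc 0 1) ({0}ᶜ : Set X)) :
    Real.log ((‖γ 0‖ + ‖γ 0 - γ 1‖) / ‖γ 0‖) ≤ qhLength ({0}ᶜ : Set X) γ 0 1 := by
  have h0 : (0:ℝ) ∈ Icc (0:ℝ) 1 := left_mem_Icc.mpr zero_le_one
  have h1 : (1:ℝ) ∈ Icc (0:ℝ) 1 := right_mem_Icc.mpr zero_le_one
  have hx : (0:ℝ) < ‖γ 0‖ := norm_pos_iff.mpr (hmaps h0)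
  have hd : Continuous (deriv γ) := hγ.continuous_deriv le_rfl
  have hnd : Continuous fun t => ‖deriv γ t‖ := hd.norm
  set L : ℝ → ℝ := fun t => ∫ s in (0:ℝ)..t, ‖deriv γ s‖ with hLdef
  have hL : ∀ t, HasDerivAt L ‖deriv γ t‖ t := fun t =>
    intervalIntegral.integral_hasDerivAt_right (hnd.intervalIntegrable 0 t)
      (hnd.stronglyMeasurableAtFilter _ _) hnd.continuousAt
  have hLc : Continuous L := by
    rw [continuous_iff_continuousAt]; exact fun t => (hL t).continuousAt
  have hL0 : L 0 = 0 := intervalIntegral.integral_same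
  have hLnn : ∀ t ∈ Icc (0:ℝ) 1, 0 ≤ L t := fun t ht =>
    intervalIntegral.integral_nonneg ht.1 (fun s _ => norm_nonneg _)
  have hpos : ∀ t ∈ Icc (0:ℝ) 1, (0:ℝ) < ‖γ 0‖ + L t := fun t ht =>
    by linarith [hLnn t ht]
  have hγpos : ∀ t ∈ Icc (0:ℝ) 1, (0:ℝ) < ‖γ t‖ := fun t ht =>
    norm_pos_iff.mpr (hmaps ht)
  have hbound : ∀ t ∈ Icc (0:ℝ) 1, ‖γ t‖ ≤ ‖γ 0‖ + L t := by
    intro t ht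
    have heq : ∫ s in (0:ℝ)..t, deriv γ s = γ t - γ 0 :=
      intervalIntegral.integral_deriv_eq_sub
        (fun s _ => (hγ.differentiable one_ne_zero).differentiableAt)
        (hd.intervalIntegrable 0 t)
    have hle : ‖γ t - γ 0‖ ≤ L t := by
      rw [← heq]
      exact intervalIntegral.norm_integral_le_integral_norm ht.1
    calc ‖γ t‖ = ‖γ 0 + (γ t - γ 0)‖ := by congr 1; abel
      _ ≤ ‖γ 0‖ + ‖γ t - γ 0‖ := norm_add_le _ _
      _ ≤ ‖γ 0‖ + L t := by linarith
  have hderivlog : ∀ t ∈ uIcc (0:ℝ) 1,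
      HasDerivAt (fun u => Real.log (‖γ 0‖ + L u)) (‖deriv γ t‖ / (‖γ 0‖ + L t)) t := by
    intro t ht
    rw [uIcc_of_le zero_le_one] at ht
    exact (((hL t).const_add ‖γ 0‖).log (hpos t ht).ne')
  have hIint : IntervalIntegrable (fun t => ‖deriv γ t‖ / (‖γ 0‖ + L t)) volume 0 1 := by
    apply ContinuousOn.intervalIntegrable
    rw [uIcc_of_le zero_le_one]
    exact hnd.continuousOn.div (continuous_const.add hLc).continuousOn
      (fun t ht => (hpos t ht).ne')
  have hIint2 : IntervalIntegrable (fun t => ‖deriv γ t‖ / ‖γ t‖) volume 0 1 := by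
    apply ContinuousOn.intervalIntegrable
    rw [uIcc_of_le zero_le_one]
    exact hnd.continuousOn.div hγ.continuous.norm.continuousOn
      (fun t ht => (hγpos t ht).ne')
  have hftc : ∫ t in (0:ℝ)..1, ‖deriv γ t‖ / (‖γ 0‖ + L t)
      = Real.log (‖γ 0‖ + L 1) - Real.log (‖γ 0‖ + L 0) :=
    intervalIntegral.integral_eq_sub_of_hasDerivAt hderivlog hIint
  have hmono : ∫ t in (0:ℝ)..1, ‖deriv γ t‖ / (‖γ 0‖ + L t)
      ≤ ∫ t in (0:ℝ)..1, ‖deriv γ t‖ / ‖γ t‖ := by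
    apply intervalIntegral.integral_mono_on zero_le_one hIint hIint2
    intro t ht
    exact div_le_div_of_nonneg_left (norm_nonneg _) (hγpos t ht) (hbound t ht)
  have hqh : qhLength ({0}ᶜ : Set X) γ 0 1 = ∫ t in (0:ℝ)..1, ‖deriv γ t‖ / ‖γ t‖ := by
    unfold qhLength
    congr 1
    ext t
    rw [infDist_compl_compl]
  have hL1 : ‖γ 0 - γ 1‖ ≤ L 1 := by
    have heq : ∫ s in (0:ℝ)..1, deriv γ s = γ 1 - γ 0 :=
      intervalIntegral.integral_deriv_eq_sub
        (fun s _ => (hγ.differentiable one_ne_zero).differentiableAt)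
        (hd.intervalIntegrable 0 1)
    rw [norm_sub_rev, ← heq]
    exact intervalIntegral.norm_integral_le_integral_norm zero_le_one
  rw [hqh, Real.log_div (by positivity) hx.ne']
  calc Real.log (‖γ 0‖ + ‖γ 0 - γ 1‖) - Real.log ‖γ 0‖
      ≤ Real.log (‖γ 0‖ + L 1) - Real.log ‖γ 0‖ := by
        have hlog := Real.log_le_log (by positivity)
          (by linarith : ‖γ 0‖ + ‖γ 0 - γ 1‖ ≤ ‖γ 0‖ + L 1)
        linarith
    _ = Real.log (‖γ 0‖ + L 1) - Real.log (‖γ 0‖ + L 0) := by rw [hL0, add_zero]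
    _ = ∫ t in (0:ℝ)..1, ‖deriv γ t‖ / (‖γ 0‖ + L t) := hftc.symm
    _ ≤ _ := hmono

lemma qhBddBelow (x y : X) : BddBelow ((fun γ : ℝ → X => qhLength ({0}ᶜ : Set X) γ 0 1) ''
    {γ | ContDiff ℝ 1 γ ∧ Set.MapsTo γ (Set.Icc 0 1) ({0}ᶜ : Set X) ∧ γ 0 = x ∧ γ 1 = y}) := by
  refine ⟨0, ?_⟩
  rintro v ⟨γ, -, rfl⟩
  exact qhLength_nonneg _ _

lemma qhDist_le {x y : X} (hx : x ≠ 0) (hlt : ‖x - y‖ < ‖x‖) :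
    qhDist ({0}ᶜ : Set X) x y ≤ ‖x - y‖ / (‖x‖ - ‖x - y‖) := by
  set γ : ℝ → X := fun t => x + t • (y - x) with hγdef
  have hder : ∀ t, HasDerivAt γ (y - x) t := by
    intro t
    have := ((hasDerivAt_id t).smul_const (y - x)).const_add x
    simpa [hγdef] using this
  have hderiv : ∀ t, deriv γ t = y - x := fun t => (hder t).deriv
  have hcd : ContDiff ℝ 1 γ :=
    contDiff_const.add (contDiff_id.smul contDiff_const)
  have hlow : ∀ t ∈ Icc (0:ℝ) 1, ‖x‖ - ‖x - y‖ ≤ ‖γ t‖ := by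
    intro t ht
    have h1 : ‖x‖ - ‖γ t‖ ≤ ‖x - γ t‖ := norm_sub_norm_le _ _
    have h2 : ‖x - γ t‖ = |t| * ‖y - x‖ := by
      rw [hγdef]; simp [norm_smul, neg_sub]
    have h3 : |t| * ‖y - x‖ ≤ ‖x - y‖ := by
      rw [norm_sub_rev y x]
      rw [abs_of_nonneg ht.1]
      nlinarith [norm_nonneg (x - y), ht.2]
    linarith [h1, h2 ▸ h1]
  have hpos : (0:ℝ) < ‖x‖ - ‖x - y‖ := by linarith
  have hmaps : MapsTo γ (Icc 0 1) ({0}ᶜ : Set X) := by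
    intro t ht
    simp only [mem_compl_iff, mem_singleton_iff]
    intro h
    have := hlow t ht
    rw [h, norm_zero] at this
    linarith
  have hmem : qhLength ({0}ᶜ : Set X) γ 0 1 ∈
      ((fun γ : ℝ → X => qhLength ({0}ᶜ : Set X) γ 0 1) ''
      {γ | ContDiff ℝ 1 γ ∧ Set.MapsTo γ (Set.Icc 0 1) ({0}ᶜ : Set X) ∧ γ 0 = x ∧ γ 1 = y}) := by
    refine ⟨γ, ⟨hcd, hmaps, ?_, ?_⟩, rfl⟩
    · simp [hγdef]
    · simp [hγdef]
  have hle : qhDist ({0}ᶜ : Set X) x y ≤ qhLength ({0}ᶜ : Set X) γ 0 1 :=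
    csInf_le (qhBddBelow x y) hmem
  refine hle.trans ?_
  have hq : qhLength ({0}ᶜ : Set X) γ 0 1 = ∫ t in (0:ℝ)..1, ‖y - x‖ / ‖γ t‖ := by
    unfold qhLength
    congr 1
    ext t
    rw [infDist_compl_compl, hderiv]
  rw [hq]
  have hint : IntervalIntegrable (fun t => ‖y - x‖ / ‖γ t‖) volume 0 1 := by
    apply ContinuousOn.intervalIntegrable
    rw [uIcc_of_le zero_le_one]
    refine continuousOn_const.div hcd.continuous.norm.continuousOn ?_
    intro t ht
    exact (lt_of_lt_of_le hpos (hlow t ht)).ne'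
  calc ∫ t in (0:ℝ)..1, ‖y - x‖ / ‖γ t‖
      ≤ ∫ _ in (0:ℝ)..1, ‖x - y‖ / (‖x‖ - ‖x - y‖) := by
        apply intervalIntegral.integral_mono_on zero_le_one hint intervalIntegrable_const
        intro t ht
        rw [norm_sub_rev y x]
        exact div_le_div_of_nonneg_left (norm_nonneg _) hpos (hlow t ht)
    _ = ‖x - y‖ / (‖x‖ - ‖x - y‖) := by simp

lemma qhSet_nonempty (hdim : 1 < Module.rank ℝ X) {x y : X} (hx : x ≠ 0) (hy : y ≠ 0) :
    ∃ γ : ℝ → X, ContDiff ℝ 1 γ ∧ MapsTo γ (Icc 0 1) ({0}ᶜ : Set X) ∧ γ 0 = x ∧ γ 1 = y := by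
  by_cases hseg : ∀ t ∈ Icc (0:ℝ) 1, x + t • (y - x) ≠ 0
  · refine ⟨fun t => x + t • (y - x), contDiff_const.add (contDiff_id.smul contDiff_const),
      fun t ht => hseg t ht, by simp, by simp⟩
  · push_neg at hseg
    obtain ⟨t₀, ht₀, hz⟩ := hseg
    have ht₀0 : t₀ ≠ 0 := by rintro rfl; simp at hz; exact hx hz
    have ht₀1 : t₀ ≠ 1 := by rintro rfl; simp at hz; exact hy hz
    have hyx : y - x = (-t₀⁻¹) • x := by
      have h1 : t₀ • (y - x) = -x := by linear_combination (norm := module) hz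
      calc y - x = t₀⁻¹ • (t₀ • (y - x)) := by rw [smul_smul, inv_mul_cancel₀ ht₀0, one_smul]
        _ = t₀⁻¹ • (-x) := by rw [h1]
        _ = (-t₀⁻¹) • x := by rw [smul_neg, neg_smul]
    obtain ⟨v, hv⟩ : ∃ v : X, v ∉ Submodule.span ℝ {x} := by
      by_contra h
      push_neg at h
      have htop : Submodule.span ℝ ({x} : Set X) = ⊤ := Submodule.eq_top_iff'.mpr h
      have h1 : Module.rank ℝ (Submodule.span ℝ ({x} : Set X)) ≤ 1 := by
        have := rank_span_le (R := ℝ) (M := X) ({x} : Set X)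
        simpa using this
      rw [htop, rank_top] at h1
      exact absurd (lt_of_lt_of_le hdim h1) (lt_irrefl _)
    set γ : ℝ → X := fun t => x + t • (y - x) + (t * (1 - t)) • v with hγdef
    have hγ0 : γ 0 = x := by simp [hγdef]
    have hγ1 : γ 1 = y := by simp [hγdef]
    refine ⟨γ, ?_, ?_, hγ0, hγ1⟩
    · exact (contDiff_const.add (contDiff_id.smul contDiff_const)).add
        ((contDiff_id.mul (contDiff_const.sub contDiff_id)).smul contDiff_const)
    · intro t ht
      simp only [mem_compl_iff, mem_singleton_iff]
      intro h
      rcases eq_or_ne t 0 with rfl | htne0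
      · rw [hγ0] at h; exact hx h
      rcases eq_or_ne t 1 with rfl | htne1
      · rw [hγ1] at h; exact hy h
      have hb : t * (1 - t) ≠ 0 := by
        apply mul_ne_zero htne0
        intro h1
        exact htne1 (by linarith)
      have hxa : γ t = (1 - t * t₀⁻¹) • x + (t * (1 - t)) • v := by
        rw [hγdef]
        simp only [hyx, smul_smul]
        module
      rw [hxa] at h
      have hveq : v = (-(1 - t * t₀⁻¹) / (t * (1 - t))) • x := by
        have h2 : (t * (1 - t)) • v = (-(1 - t * t₀⁻¹)) • x := by
          linear_combination (norm := module) h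
        calc v = (t * (1 - t))⁻¹ • ((t * (1 - t)) • v) := by
              rw [smul_smul, inv_mul_cancel₀ hb, one_smul]
          _ = (t * (1 - t))⁻¹ • ((-(1 - t * t₀⁻¹)) • x) := by rw [h2]
          _ = (-(1 - t * t₀⁻¹) / (t * (1 - t))) • x := by
              rw [smul_smul]; ring_nf
      exact hv (Submodule.mem_span_singleton.mpr ⟨_, hveq.symm⟩)

end Aux

/-- The quasihyperbolic metric on the punctured Banach space `X ∖ {0}` is conformal:
for every `C > 1` there is `r > 0` such that `C⁻¹·k(x,y) ≤ ‖x − y‖/‖x‖ ≤ C·k(x,y)`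
whenever `k(x,y) < r`. -/
theorem qhDist_punctured_conformal
    {X : Type*} [NormedAddCommGroup X] [NormedSpace ℝ X] [CompleteSpace X]
    (hdim : 1 < Module.rank ℝ X)
    (C : ℝ) (hC : 1 < C) :
    ∃ r > 0, ∀ x y : X, x ≠ 0 → y ≠ 0 →
      qhDist ({0}ᶜ : Set X) x y < r →
      C⁻¹ * qhDist ({0}ᶜ : Set X) x y ≤ ‖x - y‖ / ‖x‖ ∧
        ‖x - y‖ / ‖x‖ ≤ C * qhDist ({0}ᶜ : Set X) x y := by

  have hC0 : (0:ℝ) < C := lt_trans one_pos hC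
  set m : ℝ := min (1 - C⁻¹) (C - 1) with hm
  have hm0 : 0 < m := by
    apply lt_min
    · have : C⁻¹ < 1 := inv_lt_one_of_one_lt₀ hC
      linarith
    · linarith
  refine ⟨Real.log (1 + m), Real.log_pos (by linarith), ?_⟩
  intro x y hx hy hk
  have hxpos : 0 < ‖x‖ := norm_pos_iff.mpr hx
  set s : ℝ := ‖x - y‖ / ‖x‖ with hs
  have hs0 : 0 ≤ s := div_nonneg (norm_nonneg _) (norm_nonneg _)
  set k := qhDist ({0}ᶜ : Set X) x y with hkdef
  have hne : ((fun γ : ℝ → X => qhLength ({0}ᶜ : Set X) γ 0 1) ''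
      {γ | ContDiff ℝ 1 γ ∧ Set.MapsTo γ (Set.Icc 0 1) ({0}ᶜ : Set X) ∧
        γ 0 = x ∧ γ 1 = y}).Nonempty := by
    obtain ⟨γ, h1, h2, h3, h4⟩ := qhSet_nonempty hdim hx hy
    exact ⟨_, ⟨γ, ⟨h1, h2, h3, h4⟩, rfl⟩⟩
  have hlog : Real.log (1 + s) ≤ k := by
    have h : Real.log ((‖x‖ + ‖x - y‖) / ‖x‖) ≤ k := by
      apply le_csInf hne
      rintro v ⟨γ, ⟨h1, h2, h3, h4⟩, rfl⟩
      have := qhLength_ge h1 h2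
      rwa [h3, h4] at this
    have heq : (‖x‖ + ‖x - y‖) / ‖x‖ = 1 + s := by
      rw [hs]; field_simp
    rwa [heq] at h
  have hsm : s < m := by
    by_contra h
    push_neg at h
    have : Real.log (1 + m) ≤ Real.log (1 + s) :=
      Real.log_le_log (by linarith) (by linarith)
    linarith
  have hsC : s ≤ 1 - C⁻¹ := le_of_lt (lt_of_lt_of_le hsm (min_le_left _ _))
  have hsC2 : 1 + s ≤ C := by
    have := lt_of_lt_of_le hsm (min_le_right _ _); linarith
  have hs1 : s < 1 := by
    have : (0:ℝ) < C⁻¹ := by positivity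
    linarith
  constructor
  · have hlt : ‖x - y‖ < ‖x‖ := by
      have hsx : s * ‖x‖ = ‖x - y‖ := by rw [hs]; field_simp
      nlinarith
    have hkle : k ≤ ‖x - y‖ / (‖x‖ - ‖x - y‖) := qhDist_le hx hlt
    have hden : ‖x‖ - ‖x - y‖ ≠ 0 := by linarith
    have h1s : (1:ℝ) - s ≠ 0 := by linarith
    have heq2 : ‖x - y‖ / (‖x‖ - ‖x - y‖) = s / (1 - s) := by
      rw [hs]; field_simp
    have hfin : s / (1 - s) ≤ C * s := by
      rw [div_le_iff₀ (by linarith : (0:ℝ) < 1 - s)]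
      have hCinv : C * C⁻¹ = 1 := mul_inv_cancel₀ (ne_of_gt hC0)
      have h1 : 1 ≤ C * (1 - s) := by
        have := mul_le_mul_of_nonneg_left (show C⁻¹ ≤ 1 - s by linarith) hC0.le
        rw [hCinv] at this
        linarith
      nlinarith [mul_nonneg (sub_nonneg.mpr h1) hs0]
    have hkCs : k ≤ C * s := by rw [heq2] at hkle; linarith
    calc C⁻¹ * k ≤ C⁻¹ * (C * s) :=
          mul_le_mul_of_nonneg_left hkCs (by positivity)
      _ = s := by field_simp
  · have hA : Real.log ((1 + s)⁻¹) ≤ (1 + s)⁻¹ - 1 :=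
      Real.log_le_sub_one_of_pos (by positivity)
    rw [Real.log_inv] at hA
    have hB : s / (1 + s) = 1 - (1 + s)⁻¹ := by field_simp; ring
    have hCge : s / C ≤ s / (1 + s) :=
      div_le_div_of_nonneg_left hs0 (by linarith) hsC2
    have hkey : s / C ≤ k := by linarith
    rw [div_le_iff₀ hC0] at hkey
    calc s ≤ k * C := hkey
      _ = C * k := mul_comm k C
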